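/- Walsh characterization of non-interaction in ℤ₂ⁿ: Let f : (ℤ₂)ⁿ → ℝ with Walsh transform f̂(λ) = Σ_{x ∈ (ℤ₂)ⁿ} f(x) φ_λ(x), where φ_λ(x) = ∏_{i=1}^n (−1)^{λ_i x_i}. Two moves h₁, h₂ ∈ (ℤ₂)ⁿ (acting by x ↦ x + h, XOR) are non-interacting for f if and only if for every λ with f̂(λ) ≠ 0, either φ_λ(h₁) = 1 or φ_λ(h₂) = 1. -/

import Mathlib

/-- Walsh function `φ_λ(x) = ∏ i, (-1)^(λ_i x_i)` on `(ℤ₂)ⁿ`. -/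
def walsh {n : ℕ} (lam x : Fin n → ZMod 2) : ℝ :=
  ∏ i : Fin n, (-1 : ℝ) ^ ((lam i).val * (x i).val)

/-- Walsh (Fourier) transform of `f : (ℤ₂)ⁿ → ℝ`. -/
def walshTransform {n : ℕ} (f : (Fin n → ZMod 2) → ℝ) (lam : Fin n → ZMod 2) : ℝ :=
  ∑ x : Fin n → ZMod 2, f x * walsh lam x

namespace WalshAux

def chi (a b : ZMod 2) : ℝ := (-1 : ℝ) ^ (a.val * b.val)

lemma zmod2_cases : ∀ a : ZMod 2, a = 0 ∨ a = 1 := by decide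

lemma val_zero' : ZMod.val (0 : ZMod 2) = 0 := rfl
lemma val_one' : ZMod.val (1 : ZMod 2) = 1 := rfl

lemma chi_add (a b c : ZMod 2) : chi a (b + c) = chi a b * chi a c := by
  rcases zmod2_cases a with ha | ha <;> rcases zmod2_cases b with hb | hb <;>
    rcases zmod2_cases c with hc | hc <;> subst ha <;> subst hb <;> subst hc <;>
    simp only [chi, show (1 + 1 : ZMod 2) = 0 from rfl, val_zero', val_one',
      add_zero, zero_add] <;> norm_num

lemma chi_zero (a : ZMod 2) : chi a 0 = 1 := by
  rcases zmod2_cases a with ha | ha <;> subst ha <;> simp [chi, val_zero']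

lemma sum_zmod2 (g : ZMod 2 → ℝ) : ∑ a : ZMod 2, g a = g 0 + g 1 := by
  have h : (Finset.univ : Finset (ZMod 2)) = {0, 1} := by decide
  rw [h, Finset.sum_insert (by decide), Finset.sum_singleton]

lemma chi_sum (b : ZMod 2) : ∑ a : ZMod 2, chi a b = if b = 0 then 2 else 0 := by
  rw [sum_zmod2]
  rcases zmod2_cases b with hb | hb <;> subst hb <;>
    simp only [chi, val_zero', val_one'] <;> norm_num

lemma walsh_eq {n : ℕ} (lam x : Fin n → ZMod 2) :
    walsh lam x = ∏ i : Fin n, chi (lam i) (x i) := rfl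

lemma walsh_add_right {n : ℕ} (lam x y : Fin n → ZMod 2) :
    walsh lam (x + y) = walsh lam x * walsh lam y := by
  simp only [walsh_eq, Pi.add_apply, chi_add, Finset.prod_mul_distrib]

lemma pi_add_self {n : ℕ} (x : Fin n → ZMod 2) : x + x = 0 := by
  funext i
  simp only [Pi.add_apply, Pi.zero_apply]
  rcases zmod2_cases (x i) with h | h <;> rw [h] <;> decide

lemma walsh_zero {n : ℕ} (lam : Fin n → ZMod 2) : walsh lam 0 = 1 := by
  simp [walsh_eq, chi_zero]

lemma walsh_sq {n : ℕ} (lam x : Fin n → ZMod 2) : walsh lam x * walsh lam x = 1 := by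
  rw [← walsh_add_right, pi_add_self, walsh_zero]

lemma sum_walsh {n : ℕ} (z : Fin n → ZMod 2) :
    ∑ lam : Fin n → ZMod 2, walsh lam z = if z = 0 then (2 ^ n : ℝ) else 0 := by
  classical
  have h : ∑ lam : Fin n → ZMod 2, walsh lam z
      = ∏ i : Fin n, ∑ a : ZMod 2, chi a (z i) :=
    (Fintype.prod_sum (fun (i : Fin n) (a : ZMod 2) => chi a (z i))).symm
  rw [h]
  simp only [chi_sum]
  by_cases hz : z = 0
  · subst hz
    simp
  · rw [if_neg hz]
    obtain ⟨i, hi⟩ := Function.ne_iff.mp hz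
    have hi' : z i ≠ 0 := by simpa using hi
    exact Finset.prod_eq_zero (f := fun j => if z j = 0 then (2 : ℝ) else 0)
      (Finset.mem_univ i) (if_neg hi')

lemma transform_shift {n : ℕ} (f : (Fin n → ZMod 2) → ℝ) (h lam : Fin n → ZMod 2) :
    walshTransform (fun x => f (h + x)) lam = walsh lam h * walshTransform f lam := by
  unfold walshTransform
  rw [Finset.mul_sum]
  rw [← Equiv.sum_comp (Equiv.addLeft h) (fun x => f (h + x) * walsh lam x)]
  refine Finset.sum_congr rfl fun x _ => ?_
  have h1 : h + (Equiv.addLeft h x) = x := by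
    show h + (h + x) = x
    rw [← add_assoc, pi_add_self, zero_add]
  have h2 : walsh lam (Equiv.addLeft h x) = walsh lam h * walsh lam x :=
    walsh_add_right lam h x
  rw [h1, h2]
  ring

lemma eq_zero_of_transform {n : ℕ} (g : (Fin n → ZMod 2) → ℝ)
    (h : ∀ lam, walshTransform g lam = 0) : ∀ y, g y = 0 := by
  intro y
  have key : ∑ lam : Fin n → ZMod 2, walshTransform g lam * walsh lam y
      = (2 ^ n : ℝ) * g y := by
    unfold walshTransform
    calc ∑ lam : Fin n → ZMod 2, (∑ x : Fin n → ZMod 2, g x * walsh lam x) * walsh lam y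
        = ∑ lam : Fin n → ZMod 2, ∑ x : Fin n → ZMod 2, g x * walsh lam (x + y) := by
          refine Finset.sum_congr rfl fun lam _ => ?_
          rw [Finset.sum_mul]
          refine Finset.sum_congr rfl fun x _ => ?_
          rw [walsh_add_right]; ring
      _ = ∑ x : Fin n → ZMod 2, g x * ∑ lam : Fin n → ZMod 2, walsh lam (x + y) := by
          rw [Finset.sum_comm]
          simp [Finset.mul_sum]
      _ = ∑ x : Fin n → ZMod 2, g x * (if x = y then (2 ^ n : ℝ) else 0) := by
          refine Finset.sum_congr rfl fun x _ => ?_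
          rw [sum_walsh]
          congr 1
          have hxy : x + y = 0 ↔ x = y := by
            constructor
            · intro hxy
              have h2 := congrArg (· + y) hxy
              simpa [add_assoc, pi_add_self] using h2
            · intro hxy; subst hxy; exact pi_add_self x
          simp [hxy]
      _ = (2 ^ n : ℝ) * g y := by
          simp [Finset.sum_ite_eq', mul_comm]
  rw [Finset.sum_congr rfl (fun lam _ => by rw [h lam, zero_mul])] at key
  rw [Finset.sum_const, smul_zero] at key
  have h2 : (2 ^ n : ℝ) ≠ 0 := by positivity
  rcases mul_eq_zero.mp key.symm with k | k
  · exact absurd k h2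
  · exact k

lemma transform_D {n : ℕ} (f : (Fin n → ZMod 2) → ℝ) (h₁ h₂ lam : Fin n → ZMod 2) :
    walshTransform (fun x => f (h₁ + h₂ + x) - f (h₁ + x) - f (h₂ + x) + f x) lam
      = (walsh lam h₁ - 1) * (walsh lam h₂ - 1) * walshTransform f lam := by
  have e1 := transform_shift f (h₁ + h₂) lam
  have e2 := transform_shift f h₁ lam
  have e3 := transform_shift f h₂ lam
  have e4 : walsh lam (h₁ + h₂) = walsh lam h₁ * walsh lam h₂ := walsh_add_right lam h₁ h₂
  unfold walshTransform at *
  have expand : ∀ x : Fin n → ZMod 2,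
      (f (h₁ + h₂ + x) - f (h₁ + x) - f (h₂ + x) + f x) * walsh lam x
      = f (h₁ + h₂ + x) * walsh lam x - f (h₁ + x) * walsh lam x
        - f (h₂ + x) * walsh lam x + f x * walsh lam x := fun x => by ring
  rw [Finset.sum_congr rfl fun x _ => expand x]
  rw [Finset.sum_add_distrib, Finset.sum_sub_distrib, Finset.sum_sub_distrib]
  rw [e1, e2, e3, e4]
  ring

end WalshAux

open WalshAux in
theorem stmt_10 {n : ℕ} (f : (Fin n → ZMod 2) → ℝ) (h₁ h₂ : Fin n → ZMod 2) :
    (∀ x : Fin n → ZMod 2,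
      f (h₁ + h₂ + x) - f x = (f (h₁ + x) - f x) + (f (h₂ + x) - f x)) ↔
    (∀ lam : Fin n → ZMod 2, walshTransform f lam ≠ 0 →
      walsh lam h₁ = 1 ∨ walsh lam h₂ = 1) := by
  constructor
  · intro hx lam hne
    have hD : walshTransform
        (fun x => f (h₁ + h₂ + x) - f (h₁ + x) - f (h₂ + x) + f x) lam = 0 := by
      unfold walshTransform
      refine Finset.sum_eq_zero fun x _ => ?_
      have h0 := hx x
      have h1 : f (h₁ + h₂ + x) - f (h₁ + x) - f (h₂ + x) + f x = 0 := by linarith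
      show (f (h₁ + h₂ + x) - f (h₁ + x) - f (h₂ + x) + f x) * walsh lam x = 0
      rw [h1, zero_mul]
    rw [transform_D] at hD
    rcases mul_eq_zero.mp hD with h | h
    · rcases mul_eq_zero.mp h with h' | h'
      · left; linarith [sub_eq_zero.mp h']
      · right; linarith [sub_eq_zero.mp h']
    · exact absurd h hne
  · intro hc x
    have hD : ∀ lam, walshTransform
        (fun x => f (h₁ + h₂ + x) - f (h₁ + x) - f (h₂ + x) + f x) lam = 0 := by
      intro lam
      rw [transform_D]
      by_cases hne : walshTransform f lam = 0
      · rw [hne, mul_zero]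
      · rcases hc lam hne with h | h
        · rw [h]; ring
        · rw [h]; ring
    have hz := eq_zero_of_transform _ hD x
    linarith
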